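/- Any two unrooted binary phylogenetic trees T and S on the same leaf set of size n, where T is a caterpillar, have an agreement subtree of size at least (1/3)·log2 n. -/

import Mathlib

/-- Rooted binary trees with leaves labeled by `X` (with designated left/right children). -/
inductive BTree (X : Type) where
  | leaf : X → BTree X
  | node : BTree X → BTree X → BTree X

namespace BTree

variable {X : Type} [DecidableEq X]

/-- Left-to-right (pre-order) leaf sequence. -/
def seq : BTree X → List X
  | leaf x => [x]
  | node l r => seq l ++ seq r

/-- Leaf set. -/
def leaves (t : BTree X) : Finset X := t.seq.toFinset

/-- Number of leaves. -/
def size (t : BTree X) : ℕ := t.seq.length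

/-- A phylogenetic tree: leaves are bijectively labeled (no repeated labels). -/
def Phylo (t : BTree X) : Prop := t.seq.Nodup

def isLeaf : BTree X → Prop
  | leaf _ => True
  | node _ _ => False

/-- A rooted caterpillar: every internal node (including the root) has a leaf child. -/
def isCaterpillar : BTree X → Prop
  | leaf _ => True
  | node l r => (isLeaf l ∧ isCaterpillar r) ∨ (isLeaf r ∧ isCaterpillar l)

/-- A perfectly balanced binary tree. -/
def isPerfect : BTree X → Prop
  | leaf _ => True
  | node l r => isPerfect l ∧ isPerfect r ∧ size l = size r

/-- Restriction `T|A`: minimal subtree spanning the leaves in `A`, with degree-two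
vertices suppressed; `none` if `A` contains no leaf of the tree. -/
def restrict : BTree X → Finset X → Option (BTree X)
  | leaf x, A => if x ∈ A then some (leaf x) else none
  | node l r, A =>
    match restrict l A, restrict r A with
    | some l', some r' => some (node l' r')
    | some l', none => some l'
    | none, some r' => some r'
    | none, none => none

/-- Nodes of a tree are addressed by root-paths: `false` = go left, `true` = go right.
`subtreeAt t p` is the subtree rooted at the node with address `p` (if it exists). -/
def subtreeAt : BTree X → List Bool → Option (BTree X)
  | t, [] => some t
  | leaf _, _ :: _ => none
  | node l _, false :: p => subtreeAt l p
  | node _ r, true :: p => subtreeAt r p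

/-- Address of the least common ancestor of a set of leaves. -/
def lcaPos : BTree X → Finset X → List Bool
  | leaf _, _ => []
  | node l r, A =>
    if A ⊆ l.leaves then false :: lcaPos l A
    else if A ⊆ r.leaves then true :: lcaPos r A
    else []

/-- `v ⪯ u` in the ancestor order iff the address of `u` is a prefix of the address of `v`.
Two nodes are incomparable if neither address is a prefix of the other. -/
def Incomp (p q : List Bool) : Prop := ¬ p <+: q ∧ ¬ q <+: p

/-- `StrictBelow p q`: the node at address `p` is a strict descendant of the node at `q`. -/
def StrictBelow (p q : List Bool) : Prop := q <+: p ∧ p ≠ q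

/-- Identity of rooted phylogenetic trees: label-preserving graph isomorphism
(the left/right designation is irrelevant). -/
def REq : BTree X → BTree X → Prop
  | leaf x, leaf y => x = y
  | node l r, node l' r' => (REq l l' ∧ REq r r') ∨ (REq l r' ∧ REq r l')
  | _, _ => False

/-- The splits (edge-induced leaf bipartitions, each recorded by both of its sides)
of the unrooted tree obtained by de-rooting `t`. -/
def usplits (t : BTree X) : Set (Finset X) :=
  { A | ∃ p u, t.subtreeAt p = some u ∧ (A = u.leaves ∨ A = t.leaves \ u.leaves) }

/-- `t` and `s` de-root to identical unrooted phylogenetic trees. -/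
def UEq (t s : BTree X) : Prop := t.leaves = s.leaves ∧ usplits t = usplits s

/-- Rooted agreement of `t` and `s` on leaf set `A`: `t|A = s|A` as rooted trees. -/
def RAgree (t s : BTree X) (A : Finset X) : Prop :=
  ∃ t' s', t.restrict A = some t' ∧ s.restrict A = some s' ∧ REq t' s'

/-- Unrooted agreement of (the de-rootings of) `t` and `s` on leaf set `A`. -/
def UAgree (t s : BTree X) (A : Finset X) : Prop :=
  ∃ t' s', t.restrict A = some t' ∧ s.restrict A = some s' ∧ UEq t' s'

/-- `t` de-roots to an unrooted caterpillar. -/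
def UCaterpillar (t : BTree X) : Prop := ∃ c : BTree X, isCaterpillar c ∧ UEq c t

/-- The subtrees hanging off the path from the left-most leaf to the root
(`Q_1, …, Q_k` in the paper; `Q_1` is the left-most leaf itself). -/
def leftSpine : BTree X → List (BTree X)
  | leaf x => [leaf x]
  | node l r => leftSpine l ++ [r]

/-- The subtrees hanging off the path from the root to the right-most leaf
(`R_1, …, R_m` in the paper; `R_m` is the right-most leaf itself). -/
def rightSpine : BTree X → List (BTree X)
  | leaf x => [leaf x]
  | node l r => l :: rightSpine r

/-- Graph distance (number of edges) between leaves `x` and `y` in the unrooted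
tree obtained by de-rooting `t` (the suppressed root accounts for the `-1`). -/
def udist (t : BTree X) (x y : X) : ℕ :=
  (lcaPos t {x}).length - (lcaPos t {x, y}).length +
    ((lcaPos t {y}).length - (lcaPos t {x, y}).length) -
    (if lcaPos t {x, y} = [] then 1 else 0)

end BTree

namespace BTree

variable {X : Type} [DecidableEq X]

theorem seq_ne_nil (t : BTree X) : t.seq ≠ [] := by
  induction t with
  | leaf x => simp [seq]
  | node l r ihl ihr => simp [seq]; intro h; exact absurd h ihl

theorem mem_leaves {t : BTree X} {x : X} : x ∈ t.leaves ↔ x ∈ t.seq := by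
  simp [leaves]

theorem leaves_node (l r : BTree X) : (node l r).leaves = l.leaves ∪ r.leaves := by
  simp [leaves, seq]

theorem leaves_leaf (x : X) : (leaf x).leaves = {x} := by
  simp [leaves, seq]

theorem leaves_nonempty (t : BTree X) : t.leaves.Nonempty := by
  obtain ⟨x, hx⟩ := List.exists_mem_of_ne_nil _ (seq_ne_nil t)
  exact ⟨x, mem_leaves.2 hx⟩

theorem phylo_node {l r : BTree X} (h : Phylo (node l r)) :
    Phylo l ∧ Phylo r ∧ Disjoint l.leaves r.leaves := by
  have h' := h
  unfold Phylo at h'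
  simp only [seq, List.nodup_append] at h'
  exact ⟨h'.1, h'.2.1, by
    rw [leaves, leaves, List.disjoint_toFinset_iff_disjoint]
    intro a hx hy; exact h'.2.2 a hx a hy rfl⟩

theorem restrict_congr {t : BTree X} {A B : Finset X}
    (h : ∀ x ∈ t.leaves, x ∈ A ↔ x ∈ B) : restrict t A = restrict t B := by
  induction t with
  | leaf x =>
    have hx := h x (by simp [leaves_leaf])
    simp [restrict]
    by_cases hxa : x ∈ A
    · rw [if_pos hxa, if_pos (hx.1 hxa)]
    · rw [if_neg hxa, if_neg (fun hb => hxa (hx.2 hb))]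
  | node l r ihl ihr =>
    have hl : restrict l A = restrict l B :=
      ihl (fun x hx => h x (by rw [leaves_node]; exact Finset.mem_union_left _ hx))
    have hr : restrict r A = restrict r B :=
      ihr (fun x hx => h x (by rw [leaves_node]; exact Finset.mem_union_right _ hx))
    simp only [restrict, hl, hr]

theorem restrict_eq_none_iff {t : BTree X} {A : Finset X} :
    restrict t A = none ↔ ∀ x ∈ t.leaves, x ∉ A := by
  induction t with
  | leaf x =>
    simp only [restrict, leaves_leaf]
    by_cases hxa : x ∈ A <;> simp [hxa]
  | node l r ihl ihr =>
    simp only [restrict, leaves_node]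
    constructor
    · intro h x hx hxa
      rcases hl : restrict l A with _ | l' <;> rcases hr : restrict r A with _ | r' <;>
        simp [hl, hr] at h
      rcases Finset.mem_union.1 hx with hx | hx
      · exact ihl.1 hl x hx hxa
      · exact ihr.1 hr x hx hxa
    · intro h
      have hl : restrict l A = none := ihl.2 (fun x hx => h x (Finset.mem_union_left _ hx))
      have hr : restrict r A = none := ihr.2 (fun x hx => h x (Finset.mem_union_right _ hx))
      simp [hl, hr]

theorem restrict_leaves {t : BTree X} {A : Finset X} {t' : BTree X}
    (h : restrict t A = some t') : t'.leaves = t.leaves ∩ A := by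
  induction t generalizing t' with
  | leaf x =>
    simp only [restrict] at h
    by_cases hxa : x ∈ A
    · rw [if_pos hxa] at h
      cases h
      ext y; simp only [leaves_leaf, Finset.mem_inter, Finset.mem_singleton]
      constructor
      · rintro rfl; exact ⟨rfl, hxa⟩
      · rintro ⟨rfl, _⟩; rfl
    · rw [if_neg hxa] at h; cases h
  | node l r ihl ihr =>
    rcases hl : restrict l A with _ | l' <;> rcases hr : restrict r A with _ | r' <;>
      simp only [restrict, hl, hr] at h <;> cases h
    · have h1 : ∀ x ∈ l.leaves, x ∉ A := restrict_eq_none_iff.1 hl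
      ext y
      simp only [leaves_node, Finset.mem_union, Finset.mem_inter, ihr hr]
      constructor
      · rintro ⟨hy, hyA⟩; exact ⟨Or.inr hy, hyA⟩
      · rintro ⟨hy | hy, hyA⟩
        · exact absurd hyA (h1 y hy)
        · exact ⟨hy, hyA⟩
    · have h1 : ∀ x ∈ r.leaves, x ∉ A := restrict_eq_none_iff.1 hr
      ext y
      simp only [leaves_node, Finset.mem_union, Finset.mem_inter, ihl hl]
      constructor
      · rintro ⟨hy, hyA⟩; exact ⟨Or.inl hy, hyA⟩
      · rintro ⟨hy | hy, hyA⟩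
        · exact ⟨hy, hyA⟩
        · exact absurd hyA (h1 y hy)
    · ext y
      simp only [leaves_node, Finset.mem_union, Finset.mem_inter, ihl hl, ihr hr]
      tauto

theorem restrict_singleton {t : BTree X} (ht : Phylo t) {x : X} (hx : x ∈ t.leaves) :
    restrict t {x} = some (leaf x) := by
  induction t with
  | leaf y =>
    rw [leaves_leaf, Finset.mem_singleton] at hx
    subst hx
    simp [restrict]
  | node l r ihl ihr =>
    obtain ⟨hpl, hpr, hd⟩ := phylo_node ht
    rw [leaves_node, Finset.mem_union] at hx
    rcases hx with hx | hx
    · have h1 := ihl hpl hx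
      have h2 : restrict r {x} = none := restrict_eq_none_iff.2 (by
        intro y hy hyx
        rw [Finset.mem_singleton] at hyx; subst hyx
        exact (Finset.disjoint_left.1 hd hx) hy)
      simp [restrict, h1, h2]
    · have h1 := ihr hpr hx
      have h2 : restrict l {x} = none := restrict_eq_none_iff.2 (by
        intro y hy hyx
        rw [Finset.mem_singleton] at hyx; subst hyx
        exact (Finset.disjoint_right.1 hd hx) hy)
      simp [restrict, h1, h2]

theorem restrict_isSome {t : BTree X} {A : Finset X} {x : X} (hx : x ∈ t.leaves) (hxA : x ∈ A) :
    ∃ t', restrict t A = some t' := by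
  rcases h : restrict t A with _ | t'
  · exact absurd hxA (restrict_eq_none_iff.1 h x hx)
  · exact ⟨t', rfl⟩

end BTree
namespace BTree

variable {X : Type} [DecidableEq X]

/-- The leaf sets of rooted subtrees. -/
def ssplits (t : BTree X) : Set (Finset X) :=
  {A | ∃ p u, t.subtreeAt p = some u ∧ A = u.leaves}

theorem subtreeAt_nil (t : BTree X) : subtreeAt t [] = some t := by cases t <;> rfl

theorem subtreeAt_leaf_cons (x : X) (b : Bool) (p : List Bool) :
    subtreeAt (leaf x) (b :: p) = none := rfl

theorem subtreeAt_cons_false (l r : BTree X) (p : List Bool) :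
    subtreeAt (node l r) (false :: p) = subtreeAt l p := rfl

theorem subtreeAt_cons_true (l r : BTree X) (p : List Bool) :
    subtreeAt (node l r) (true :: p) = subtreeAt r p := rfl

theorem ssplits_leaf (x : X) : ssplits (leaf x) = {({x} : Finset X)} := by
  ext S
  simp only [ssplits, Set.mem_setOf_eq, Set.mem_singleton_iff]
  constructor
  · rintro ⟨p, u, hp, rfl⟩
    cases p with
    | nil => rw [subtreeAt_nil] at hp; cases hp; exact leaves_leaf x
    | cons b q => rw [subtreeAt_leaf_cons] at hp; cases hp
  · rintro rfl
    exact ⟨[], leaf x, subtreeAt_nil _, (leaves_leaf x).symm⟩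

theorem ssplits_node (l r : BTree X) :
    ssplits (node l r) = insert (node l r).leaves (ssplits l ∪ ssplits r) := by
  ext S
  simp only [ssplits, Set.mem_setOf_eq, Set.mem_insert_iff, Set.mem_union]
  constructor
  · rintro ⟨p, u, hp, rfl⟩
    cases p with
    | nil =>
      rw [subtreeAt_nil] at hp; cases hp; exact Or.inl rfl
    | cons b q =>
      cases b
      · exact Or.inr (Or.inl ⟨q, u, hp, rfl⟩)
      · exact Or.inr (Or.inr ⟨q, u, hp, rfl⟩)
  · rintro (rfl | ⟨p, u, hp, rfl⟩ | ⟨p, u, hp, rfl⟩)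
    · exact ⟨[], node l r, subtreeAt_nil _, rfl⟩
    · exact ⟨false :: p, u, hp, rfl⟩
    · exact ⟨true :: p, u, hp, rfl⟩

theorem usplits_eq (t : BTree X) :
    usplits t = ssplits t ∪ (fun S => t.leaves \ S) '' ssplits t := by
  ext S
  simp only [usplits, ssplits, Set.mem_setOf_eq, Set.mem_union, Set.mem_image]
  constructor
  · rintro ⟨p, u, hp, rfl | rfl⟩
    · exact Or.inl ⟨p, u, hp, rfl⟩
    · exact Or.inr ⟨u.leaves, ⟨p, u, hp, rfl⟩, rfl⟩
  · rintro (⟨p, u, hp, rfl⟩ | ⟨B, ⟨p, u, hp, rfl⟩, rfl⟩)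
    · exact ⟨p, u, hp, Or.inl rfl⟩
    · exact ⟨p, u, hp, Or.inr rfl⟩

theorem mem_ssplits_self (t : BTree X) : t.leaves ∈ ssplits t := ⟨[], t, subtreeAt_nil t, rfl⟩

theorem ssplits_subset_leaves {t : BTree X} {S : Finset X} (h : S ∈ ssplits t) :
    S ⊆ t.leaves := by
  induction t with
  | leaf x => rw [ssplits_leaf] at h; rw [h, leaves_leaf]
  | node l r ihl ihr =>
    rw [ssplits_node] at h
    rcases h with rfl | h | h
    · exact Finset.Subset.refl _
    · exact (ihl h).trans (by rw [leaves_node]; exact Finset.subset_union_left)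
    · exact (ihr h).trans (by rw [leaves_node]; exact Finset.subset_union_right)

theorem ssplits_nonempty {t : BTree X} {S : Finset X} (h : S ∈ ssplits t) : S.Nonempty := by
  obtain ⟨p, u, _, rfl⟩ := h
  exact leaves_nonempty u

/-- Forward commutation: a subtree of `t` restricts to a subtree of `t|A` (or to nothing). -/
theorem subtree_restrict_comm {t : BTree X} {A : Finset X} {t' : BTree X}
    (h : restrict t A = some t') {p : List Bool} {u : BTree X} (hp : subtreeAt t p = some u) :
    restrict u A = none ∨ ∃ q u', subtreeAt t' q = some u' ∧ restrict u A = some u' := by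
  induction t generalizing t' p u with
  | leaf x =>
    cases p with
    | nil =>
      rw [subtreeAt_nil] at hp; cases hp
      exact Or.inr ⟨[], t', subtreeAt_nil t' ▸ rfl, h⟩
    | cons b q => rw [subtreeAt_leaf_cons] at hp; cases hp
  | node l r ihl ihr =>
    cases p with
    | nil =>
      rw [subtreeAt_nil] at hp; cases hp
      exact Or.inr ⟨[], t', subtreeAt_nil t' ▸ rfl, h⟩
    | cons b q =>
      rcases hl : restrict l A with _ | l' <;> rcases hr : restrict r A with _ | r' <;>
        simp only [restrict, hl, hr] at h <;> cases h
      · -- l none, r some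
        cases b
        · -- u inside l
          simp only [subtreeAt_cons_false, subtreeAt_cons_true] at hp
          left
          refine restrict_eq_none_iff.2 (fun x hx hxA => ?_)
          have : x ∈ l.leaves := by
            have := ssplits_subset_leaves ⟨q, u, hp, rfl⟩
            exact this hx
          exact restrict_eq_none_iff.1 hl x this hxA
        · simp only [subtreeAt_cons_false, subtreeAt_cons_true] at hp
          exact ihr hr hp
      · -- l some, r none
        cases b
        · simp only [subtreeAt_cons_false, subtreeAt_cons_true] at hp
          exact ihl hl hp
        · simp only [subtreeAt_cons_false, subtreeAt_cons_true] at hp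
          left
          refine restrict_eq_none_iff.2 (fun x hx hxA => ?_)
          have : x ∈ r.leaves := ssplits_subset_leaves ⟨q, u, hp, rfl⟩ hx
          exact restrict_eq_none_iff.1 hr x this hxA
      · -- both some
        cases b
        · simp only [subtreeAt_cons_false, subtreeAt_cons_true] at hp
          rcases ihl hl hp with h | ⟨q', u', hq', hu'⟩
          · exact Or.inl h
          · exact Or.inr ⟨false :: q', u', hq', hu'⟩
        · simp only [subtreeAt_cons_false, subtreeAt_cons_true] at hp
          rcases ihr hr hp with h | ⟨q', u', hq', hu'⟩
          · exact Or.inl h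
          · exact Or.inr ⟨true :: q', u', hq', hu'⟩

/-- Backward commutation: every subtree of `t|A` is the restriction of a subtree of `t`. -/
theorem restrict_subtree_comm {t : BTree X} {A : Finset X} {t' : BTree X}
    (h : restrict t A = some t') {q : List Bool} {u' : BTree X}
    (hq : subtreeAt t' q = some u') :
    ∃ p u, subtreeAt t p = some u ∧ restrict u A = some u' := by
  induction t generalizing t' q u' with
  | leaf x =>
    simp only [restrict] at h
    by_cases hxa : x ∈ A
    · rw [if_pos hxa] at h; cases h
      cases q with
      | nil =>
        rw [subtreeAt_nil] at hq; cases hq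
        exact ⟨[], leaf x, subtreeAt_nil _, by simp [restrict, hxa]⟩
      | cons b p => rw [subtreeAt_leaf_cons] at hq; cases hq
    · rw [if_neg hxa] at h; cases h
  | node l r ihl ihr =>
    rcases hl : restrict l A with _ | l' <;> rcases hr : restrict r A with _ | r' <;>
      simp only [restrict, hl, hr] at h <;> cases h
    · obtain ⟨p, u, hp, hu⟩ := ihr hr hq
      exact ⟨true :: p, u, hp, hu⟩
    · obtain ⟨p, u, hp, hu⟩ := ihl hl hq
      exact ⟨false :: p, u, hp, hu⟩
    · cases q with
      | nil =>
        rw [subtreeAt_nil] at hq; cases hq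
        exact ⟨[], node l r, subtreeAt_nil _, by simp [restrict, hl, hr]⟩
      | cons b p =>
        cases b
        · simp only [subtreeAt_cons_false, subtreeAt_cons_true] at hq
          obtain ⟨p', u, hp, hu⟩ := ihl hl hq
          exact ⟨false :: p', u, hp, hu⟩
        · simp only [subtreeAt_cons_false, subtreeAt_cons_true] at hq
          obtain ⟨p', u, hp, hu⟩ := ihr hr hq
          exact ⟨true :: p', u, hp, hu⟩

/-- Splits of a restriction are restrictions of splits. -/
theorem usplits_restrict {t : BTree X} {A : Finset X} {t' : BTree X}
    (hA : A ⊆ t.leaves) (h : restrict t A = some t') :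
    usplits t' = (fun S => S ∩ A) '' usplits t := by
  have hlv : t'.leaves = A := by
    rw [restrict_leaves h, Finset.inter_comm, Finset.inter_eq_left]; exact hA
  ext S
  constructor
  · rintro ⟨q, u', hq, rfl | rfl⟩
    · obtain ⟨p, u, hp, hu⟩ := restrict_subtree_comm h hq
      refine ⟨u.leaves, ⟨p, u, hp, Or.inl rfl⟩, ?_⟩
      rw [restrict_leaves hu]
    · obtain ⟨p, u, hp, hu⟩ := restrict_subtree_comm h hq
      refine ⟨t.leaves \ u.leaves, ⟨p, u, hp, Or.inr rfl⟩, ?_⟩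
      rw [restrict_leaves hu, hlv]
      ext y
      simp only [Finset.mem_inter, Finset.mem_sdiff]
      constructor
      · rintro ⟨⟨hyt, hyu⟩, hyA⟩
        exact ⟨hyA, fun hc => hyu hc.1⟩
      · rintro ⟨hyA, hyu⟩
        exact ⟨⟨hA hyA, fun hc => hyu ⟨hc, hyA⟩⟩, hyA⟩
  · rintro ⟨B, ⟨p, u, hp, rfl | rfl⟩, rfl⟩
    · show u.leaves ∩ A ∈ usplits t'
      rcases subtree_restrict_comm h hp with hnone | ⟨q, u', hq, hu'⟩
      · have : u.leaves ∩ A = ∅ := by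
          ext y; simp only [Finset.mem_inter, Finset.notMem_empty, iff_false]
          rintro ⟨hy, hyA⟩
          exact restrict_eq_none_iff.1 hnone y hy hyA
        rw [this]
        exact ⟨[], t', subtreeAt_nil _, Or.inr (by simp)⟩
      · rw [← restrict_leaves hu']
        exact ⟨q, u', hq, Or.inl rfl⟩
    · show (t.leaves \ u.leaves) ∩ A ∈ usplits t'
      have hrw : (t.leaves \ u.leaves) ∩ A = A \ (u.leaves ∩ A) := by
        ext y
        simp only [Finset.mem_inter, Finset.mem_sdiff]
        constructor
        · rintro ⟨⟨hyt, hyu⟩, hyA⟩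
          exact ⟨hyA, fun hc => hyu hc.1⟩
        · rintro ⟨hyA, hyu⟩
          exact ⟨⟨hA hyA, fun hc => hyu ⟨hc, hyA⟩⟩, hyA⟩
      rw [hrw]
      rcases subtree_restrict_comm h hp with hnone | ⟨q, u', hq, hu'⟩
      · have : u.leaves ∩ A = ∅ := by
          ext y; simp only [Finset.mem_inter, Finset.notMem_empty, iff_false]
          rintro ⟨hy, hyA⟩
          exact restrict_eq_none_iff.1 hnone y hy hyA
        rw [this, Finset.sdiff_empty, ← hlv]
        exact ⟨[], t', subtreeAt_nil _, Or.inl rfl⟩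
      · rw [← restrict_leaves hu', ← hlv]
        exact ⟨q, u', hq, Or.inr rfl⟩

end BTree
namespace BTree

variable {X : Type} [DecidableEq X]

/-- The rooted-subtree split system of a caterpillar with spine order `M`:
singletons and suffix sets. -/
def catSS (M : List X) : Set (Finset X) :=
  {S | (∃ x ∈ M, S = {x}) ∨ ∃ i < M.length, S = (M.drop i).toFinset}

/-- The unrooted split system of a caterpillar with spine order `M`. -/
def catCS (M : List X) : Set (Finset X) :=
  catSS M ∪ (fun S => M.toFinset \ S) '' catSS M

theorem catSS_singleton (x : X) : catSS [x] = {({x} : Finset X)} := by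
  ext S
  simp only [catSS, Set.mem_setOf_eq, Set.mem_singleton_iff]
  constructor
  · rintro (⟨y, hy, rfl⟩ | ⟨i, hi, rfl⟩)
    · simp only [List.mem_singleton] at hy; subst hy; rfl
    · simp only [List.length_singleton, Nat.lt_one_iff] at hi; subst hi; simp
  · rintro rfl
    exact Or.inl ⟨x, by simp, rfl⟩

theorem catSS_cons (x : X) (M : List X) :
    catSS (x :: M) = insert ((x :: M).toFinset) (insert ({x} : Finset X) (catSS M)) := by
  ext S
  simp only [catSS, Set.mem_setOf_eq, Set.mem_insert_iff]
  constructor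
  · rintro (⟨y, hy, rfl⟩ | ⟨i, hi, rfl⟩)
    · rcases List.mem_cons.1 hy with rfl | hy
      · exact Or.inr (Or.inl rfl)
      · exact Or.inr (Or.inr (Or.inl ⟨y, hy, rfl⟩))
    · cases i with
      | zero => exact Or.inl (by simp)
      | succ j =>
        simp only [List.length_cons, Nat.succ_lt_succ_iff] at hi
        exact Or.inr (Or.inr (Or.inr ⟨j, hi, by simp [List.drop_succ_cons]⟩))
  · rintro (rfl | rfl | ⟨y, hy, rfl⟩ | ⟨i, hi, rfl⟩)
    · exact Or.inr ⟨0, by simp, by simp⟩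
    · exact Or.inl ⟨x, by simp, rfl⟩
    · exact Or.inl ⟨y, by simp [hy], rfl⟩
    · exact Or.inr ⟨i + 1, by simpa using Nat.succ_lt_succ hi, by simp [List.drop_succ_cons]⟩

theorem catSS_subset {M : List X} {S : Finset X} (h : S ∈ catSS M) : S ⊆ M.toFinset := by
  rcases h with ⟨x, hx, rfl⟩ | ⟨i, hi, rfl⟩
  · intro y hy; rw [Finset.mem_singleton] at hy; subst hy; simpa using hx
  · intro y hy
    rw [List.mem_toFinset] at hy ⊢
    exact List.mem_of_mem_drop hy

theorem catSS_ne_empty {M : List X} {S : Finset X} (h : S ∈ catSS M) : S ≠ ∅ := by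
  rcases h with ⟨x, hx, rfl⟩ | ⟨i, hi, rfl⟩
  · simp
  · intro hc
    rw [List.toFinset_eq_empty_iff] at hc
    rw [List.drop_eq_nil_iff] at hc
    omega

theorem toFinset_mem_catSS {M : List X} (hM : M ≠ []) : M.toFinset ∈ catSS M :=
  Or.inr ⟨0, by cases M with | nil => exact absurd rfl hM | cons a l => simp, by simp⟩

theorem singleton_mem_catSS {M : List X} {x : X} (hx : x ∈ M) : ({x} : Finset X) ∈ catSS M :=
  Or.inl ⟨x, hx, rfl⟩

theorem filter_drop_eq_drop_filter (p : X → Bool) :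
    ∀ (l : List X) (j : ℕ), ∃ i, (l.drop i).filter p = (l.filter p).drop j := by
  intro l
  induction l with
  | nil => intro j; exact ⟨0, by simp⟩
  | cons x T ih =>
    intro j
    by_cases hx : p x
    · cases j with
      | zero => exact ⟨0, by simp⟩
      | succ j' =>
        obtain ⟨i', hi'⟩ := ih j'
        exact ⟨i' + 1, by simpa [List.filter_cons, hx] using hi'⟩
    · obtain ⟨i', hi'⟩ := ih j
      exact ⟨i' + 1, by simpa [List.filter_cons, hx] using hi'⟩

theorem drop_filter_eq_filter_drop (p : X → Bool) :
    ∀ (l : List X) (i : ℕ), ∃ j, (l.filter p).drop j = (l.drop i).filter p := by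
  intro l
  induction l with
  | nil => intro i; exact ⟨0, by simp⟩
  | cons x T ih =>
    intro i
    cases i with
    | zero => exact ⟨0, by simp⟩
    | succ i' =>
      obtain ⟨j', hj'⟩ := ih i'
      by_cases hx : p x
      · exact ⟨j' + 1, by simpa [List.filter_cons, hx] using hj'⟩
      · exact ⟨j', by simpa [List.filter_cons, hx] using hj'⟩

end BTree
namespace BTree

variable {X : Type} [DecidableEq X]

/-- The subtree split system of any caterpillar is that of a duplicate-free spine order. -/
theorem caterpillar_ssplits {c : BTree X} (hc : isCaterpillar c) :
    ∃ L : List X, L.Nodup ∧ L.toFinset = c.leaves ∧ ssplits c = catSS L := by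
  induction c with
  | leaf x =>
    exact ⟨[x], by simp, by simp [leaves_leaf], by rw [ssplits_leaf, catSS_singleton]⟩
  | node l r ihl ihr =>
    rcases hc with ⟨hl, hr⟩ | ⟨hr, hl⟩
    · -- l is a leaf
      cases l with
      | node a b => exact hl.elim
      | leaf x =>
        obtain ⟨L', hnd, htf, hss⟩ := ihr hr
        have hLne : L' ≠ [] := by
          intro hc0
          have := leaves_nonempty r
          rw [← htf, hc0] at this
          simp at this
        by_cases hx : x ∈ r.leaves
        · refine ⟨L', hnd, ?_, ?_⟩
          · rw [htf, leaves_node, leaves_leaf]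
            rw [Finset.union_eq_right.2 (by simpa using hx)]
          · rw [ssplits_node, ssplits_leaf, hss]
            apply Set.Subset.antisymm
            · rintro S hS
              rcases hS with rfl | hS
              · rw [leaves_node, leaves_leaf,
                  Finset.union_eq_right.2 (by simpa using hx), ← htf]
                exact toFinset_mem_catSS hLne
              · rcases hS with rfl | hS
                · exact singleton_mem_catSS (by rw [← List.mem_toFinset, htf]; exact hx)
                · exact hS
            · intro S hS
              exact Or.inr (Or.inr hS)
        · refine ⟨x :: L', by refine List.nodup_cons.2 ⟨?_, hnd⟩; rw [← List.mem_toFinset, htf]; exact hx, ?_, ?_⟩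
          · rw [List.toFinset_cons, htf, leaves_node, leaves_leaf]
            ext y; simp [or_comm]
          · rw [ssplits_node, ssplits_leaf, hss, catSS_cons]
            have : leaves (node (leaf x) r) = (x :: L').toFinset := by
              rw [List.toFinset_cons, htf, leaves_node, leaves_leaf]
              ext y; simp
            rw [this]
            rw [Set.singleton_union]
    · -- r is a leaf
      cases r with
      | node a b => exact hr.elim
      | leaf x =>
        obtain ⟨L', hnd, htf, hss⟩ := ihl hl
        have hLne : L' ≠ [] := by
          intro hc0
          have := leaves_nonempty l
          rw [← htf, hc0] at this
          simp at this
        by_cases hx : x ∈ l.leaves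
        · refine ⟨L', hnd, ?_, ?_⟩
          · rw [htf, leaves_node, leaves_leaf]
            rw [Finset.union_eq_left.2 (by simpa using hx)]
          · rw [ssplits_node, ssplits_leaf, hss]
            apply Set.Subset.antisymm
            · rintro S hS
              rcases hS with rfl | hS
              · rw [leaves_node, leaves_leaf,
                  Finset.union_eq_left.2 (by simpa using hx), ← htf]
                exact toFinset_mem_catSS hLne
              · rcases hS with hS | rfl
                · exact hS
                · exact singleton_mem_catSS (by rw [← List.mem_toFinset, htf]; exact hx)
            · intro S hS
              exact Or.inr (Or.inl hS)
        · refine ⟨x :: L', by refine List.nodup_cons.2 ⟨?_, hnd⟩; rw [← List.mem_toFinset, htf]; exact hx, ?_, ?_⟩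
          · rw [List.toFinset_cons, htf, leaves_node, leaves_leaf]
            ext y; simp [or_comm]
          · rw [ssplits_node, ssplits_leaf, hss, catSS_cons]
            have : leaves (node l (leaf x)) = (x :: L').toFinset := by
              rw [List.toFinset_cons, htf, leaves_node, leaves_leaf]
              ext y; simp [or_comm]
            rw [this]
            rw [Set.union_comm, Set.singleton_union]

theorem toFinset_filter_mem (L : List X) (A : Finset X) :
    (L.filter (fun y => decide (y ∈ A))).toFinset = L.toFinset ∩ A := by
  ext y
  simp [List.mem_filter]

theorem inter_mem_catSS_filter {L : List X} {A : Finset X} {S : Finset X} (hS : S ∈ catSS L) :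
    S ∩ A ∈ catSS (L.filter (fun y => decide (y ∈ A))) ∨ S ∩ A = ∅ := by
  rcases hS with ⟨x, hx, rfl⟩ | ⟨i, hi, rfl⟩
  · by_cases hxA : x ∈ A
    · left
      have : ({x} : Finset X) ∩ A = {x} := by
        ext y; simp; rintro rfl; exact hxA
      rw [this]
      exact singleton_mem_catSS (List.mem_filter.2 ⟨hx, by simpa⟩)
    · right
      ext y; simp; rintro rfl; exact hxA
  · have heq : (L.drop i).toFinset ∩ A = ((L.drop i).filter (fun y => decide (y ∈ A))).toFinset := by
      rw [toFinset_filter_mem]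
    obtain ⟨j, hj⟩ := drop_filter_eq_filter_drop (fun y => decide (y ∈ A)) L i
    rcases eq_or_ne ((L.drop i).filter (fun y => decide (y ∈ A))) [] with hnil | hnil
    · right; rw [heq, hnil]; simp
    · left
      rw [heq, ← hj]
      refine Or.inr ⟨j, ?_, rfl⟩
      by_contra hc
      push_neg at hc
      rw [← hj] at hnil
      exact hnil (List.drop_eq_nil_iff.2 (by omega))

theorem catSS_filter_subset_inter {L : List X} {A : Finset X} {S' : Finset X}
    (hS' : S' ∈ catSS (L.filter (fun y => decide (y ∈ A)))) :
    ∃ S ∈ catSS L, S ∩ A = S' := by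
  rcases hS' with ⟨x, hx, rfl⟩ | ⟨j, hj, rfl⟩
  · obtain ⟨hxL, hxA⟩ := List.mem_filter.1 hx
    refine ⟨{x}, singleton_mem_catSS hxL, ?_⟩
    ext y; simp; rintro rfl; simpa using hxA
  · obtain ⟨i, hi⟩ := filter_drop_eq_drop_filter (fun y => decide (y ∈ A)) L j
    have hne : (L.filter (fun y => decide (y ∈ A))).drop j ≠ [] :=
      fun hc => by rw [List.drop_eq_nil_iff] at hc; omega
    have hiL : i < L.length := by
      by_contra hc
      push_neg at hc
      rw [List.drop_eq_nil_iff.2 (by omega)] at hi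
      exact hne (by simp [← hi])
    refine ⟨(L.drop i).toFinset, Or.inr ⟨i, hiL, rfl⟩, ?_⟩
    rw [← toFinset_filter_mem, hi]

theorem sdiff_inter_eq {U B A : Finset X} (hA : A ⊆ U) : (U \ B) ∩ A = A \ (B ∩ A) := by
  ext y
  simp only [Finset.mem_inter, Finset.mem_sdiff]
  constructor
  · rintro ⟨⟨hyt, hyu⟩, hyA⟩
    exact ⟨hyA, fun hc => hyu hc.1⟩
  · rintro ⟨hyA, hyu⟩
    exact ⟨⟨hA hyA, fun hc => hyu ⟨hc, hyA⟩⟩, hyA⟩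

/-- The image of a caterpillar's unrooted split system under restriction to `A`. -/
theorem image_usplits_caterpillar {c : BTree X} {L : List X}
    (hss : ssplits c = catSS L) (hLf : L.toFinset = c.leaves)
    {A : Finset X} (hA : A ⊆ c.leaves) (hAne : A.Nonempty) :
    (fun S => S ∩ A) '' usplits c = catCS (L.filter (fun y => decide (y ∈ A))) := by
  set M := L.filter (fun y => decide (y ∈ A)) with hM
  have hMf : M.toFinset = A := by
    rw [hM, toFinset_filter_mem, hLf, Finset.inter_eq_right.2 hA]
  have hMne : M ≠ [] := by
    intro hc0
    rw [hc0] at hMf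
    obtain ⟨y, hy⟩ := hAne
    rw [← hMf] at hy
    simp at hy
  have hfull : M.toFinset ∈ catSS M := toFinset_mem_catSS hMne
  rw [usplits_eq, Set.image_union, hss]
  have hcompl : (fun S => S ∩ A) '' ((fun S => c.leaves \ S) '' catSS L) =
      (fun S => A \ S) '' ((fun S => S ∩ A) '' catSS L) := by
    rw [← Set.image_comp, ← Set.image_comp]
    apply Set.image_congr
    intro B _
    simp only [Function.comp_apply]
    exact sdiff_inter_eq hA
  rw [hcompl]
  set E := (fun S => S ∩ A) '' catSS L with hE
  have hE1 : ∀ S ∈ E, S ∈ catSS M ∨ S = ∅ := by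
    rintro S ⟨B, hB, rfl⟩
    exact inter_mem_catSS_filter hB
  have hE2 : catSS M ⊆ E := by
    intro S hS
    obtain ⟨B, hB, hBA⟩ := catSS_filter_subset_inter hS
    exact ⟨B, hB, hBA⟩
  apply Set.Subset.antisymm
  · rintro S (hS | ⟨S', hS', rfl⟩)
    · rcases hE1 S hS with h | rfl
      · exact Or.inl h
      · refine Or.inr ⟨M.toFinset, hfull, ?_⟩
        rw [hMf]; simp
    · rcases hE1 S' hS' with h | rfl
      · exact Or.inr ⟨S', h, by rw [hMf]⟩
      · refine Or.inl (by rw [← hMf]; simpa using hfull)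
  · rintro S (hS | ⟨S', hS', rfl⟩)
    · exact Or.inl (hE2 hS)
    · exact Or.inr ⟨S', hE2 hS', by rw [hMf]⟩

theorem catCS_compl_mem {M : List X} {S : Finset X} (h : S ∈ catCS M) :
    M.toFinset \ S ∈ catCS M := by
  rcases h with h | ⟨S', hS', rfl⟩
  · exact Or.inr ⟨S, h, rfl⟩
  · left
    rw [sdiff_sdiff_eq_self (catSS_subset hS')]
    exact hS'

theorem toFinset_take_eq {M : List X} (h : M.Nodup) (j : ℕ) :
    (M.take j).toFinset = M.toFinset \ (M.drop j).toFinset := by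
  have hsplit : M.take j ++ M.drop j = M := List.take_append_drop j M
  have hnd : (M.take j ++ M.drop j).Nodup := by rw [hsplit]; exact h
  rw [List.nodup_append] at hnd
  ext y
  simp only [List.mem_toFinset, Finset.mem_sdiff, List.mem_toFinset]
  constructor
  · intro hy
    exact ⟨by rw [← hsplit]; exact List.mem_append_left _ hy,
      fun hc => hnd.2.2 y hy y hc rfl⟩
  · rintro ⟨hy, hyd⟩
    rw [← hsplit] at hy
    rcases List.mem_append.1 hy with hy | hy
    · exact hy
    · exact absurd hy hyd

theorem catSS_reverse_subset {M : List X} (h : M.Nodup) :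
    catSS M.reverse ⊆ catCS M := by
  rintro S (⟨x, hx, rfl⟩ | ⟨i, hi, rfl⟩)
  · exact Or.inl (singleton_mem_catSS (List.mem_reverse.1 hx))
  · rw [List.length_reverse] at hi
    rw [List.drop_reverse, List.toFinset_reverse]
    rcases eq_or_ne (M.length - i) M.length with he | hne
    · rw [he, List.take_length]
      exact Or.inl (toFinset_mem_catSS (by intro hc; rw [hc] at hi; simp at hi))
    · rw [toFinset_take_eq h]
      refine Or.inr ⟨(M.drop (M.length - i)).toFinset, Or.inr ⟨M.length - i, by omega, rfl⟩, rfl⟩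

theorem catCS_reverse {M : List X} (h : M.Nodup) : catCS M.reverse = catCS M := by
  have key : ∀ (N : List X), N.Nodup → catCS N.reverse ⊆ catCS N := by
    intro N hN
    rintro S (hS | ⟨S', hS', rfl⟩)
    · exact catSS_reverse_subset hN hS
    · rw [List.toFinset_reverse]
      exact catCS_compl_mem (catSS_reverse_subset hN hS')
  apply Set.Subset.antisymm (key M h)
  have := key M.reverse (List.nodup_reverse.2 h)
  rw [List.reverse_reverse] at this
  exact this

end BTree
namespace BTree

variable {X : Type} [DecidableEq X]

/-- An increasing-comb witness: `s` restricted to the leaves of `M` is a caterpillar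
whose spine order is exactly `M` (which is `lt`-sorted). -/
def Wit (lt : X → X → Prop) (s : BTree X) (M : List X) : Prop :=
  M ≠ [] ∧ M.Chain' lt ∧ M.toFinset ⊆ s.leaves ∧
    ∃ s', restrict s M.toFinset = some s' ∧ ssplits s' = catSS M

theorem wit_leaf (lt : X → X → Prop) (x : X) : Wit lt (leaf x) [x] := by
  refine ⟨by simp, by exact List.isChain_singleton x, by simp [leaves_leaf], leaf x, ?_, ?_⟩
  · simp [restrict]
  · rw [ssplits_leaf, catSS_singleton]

theorem wit_lift_left {lt : X → X → Prop} {l r : BTree X} {M : List X}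
    (hph : Phylo (node l r)) (h : Wit lt l M) : Wit lt (node l r) M := by
  obtain ⟨hne, hch, hsub, u, hres, hss⟩ := h
  obtain ⟨hpl, hpr, hd⟩ := phylo_node hph
  have hnone : restrict r M.toFinset = none :=
    restrict_eq_none_iff.2 (fun x hx hxM =>
      (Finset.disjoint_right.1 hd hx) (hsub hxM))
  refine ⟨hne, hch, ?_, u, ?_, hss⟩
  · rw [leaves_node]; exact hsub.trans Finset.subset_union_left
  · simp [restrict, hres, hnone]

theorem wit_lift_right {lt : X → X → Prop} {l r : BTree X} {M : List X}
    (hph : Phylo (node l r)) (h : Wit lt r M) : Wit lt (node l r) M := by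
  obtain ⟨hne, hch, hsub, u, hres, hss⟩ := h
  obtain ⟨hpl, hpr, hd⟩ := phylo_node hph
  have hnone : restrict l M.toFinset = none :=
    restrict_eq_none_iff.2 (fun x hx hxM =>
      (Finset.disjoint_left.1 hd hx) (hsub hxM))
  refine ⟨hne, hch, ?_, u, ?_, hss⟩
  · rw [leaves_node]; exact hsub.trans Finset.subset_union_right
  · simp [restrict, hres, hnone]

theorem chain'_cons_of_forall {lt : X → X → Prop} {a : X} {M : List X}
    (hM : M.Chain' lt) (h : ∀ x ∈ M, lt a x) : (a :: M).Chain' lt := by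
  cases M with
  | nil => exact List.isChain_singleton a
  | cons y T => exact List.IsChain.cons_cons (h y (by simp)) hM

/-- Prepend a leaf `a` sitting in the right child to a comb contained in the left child. -/
theorem wit_extend_right {lt : X → X → Prop} {l r : BTree X} {M : List X} {a : X}
    (hph : Phylo (node l r)) (h : Wit lt l M) (ha : a ∈ r.leaves)
    (hlt : ∀ x ∈ M, lt a x) : Wit lt (node l r) (a :: M) := by
  obtain ⟨hne, hch, hsub, u, hres, hss⟩ := h
  obtain ⟨hpl, hpr, hd⟩ := phylo_node hph
  have haL : a ∉ l.leaves := Finset.disjoint_right.1 hd ha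
  have htf : (a :: M).toFinset = insert a M.toFinset := by simp
  have hresl : restrict l (insert a M.toFinset) = some u := by
    rw [← hres]
    apply restrict_congr
    intro x hx
    simp only [Finset.mem_insert]
    constructor
    · rintro (rfl | hxM)
      · exact absurd hx haL
      · exact hxM
    · exact Or.inr
  have hresr : restrict r (insert a M.toFinset) = some (leaf a) := by
    have : restrict r (insert a M.toFinset) = restrict r {a} := by
      apply restrict_congr
      intro x hx
      simp only [Finset.mem_insert, Finset.mem_singleton]
      constructor
      · rintro (rfl | hxM)
        · rfl
        · exact absurd hx (Finset.disjoint_left.1 hd (hsub hxM))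
      · exact Or.inl
    rw [this]
    exact restrict_singleton hpr ha
  have hlvu : u.leaves = M.toFinset := by
    rw [restrict_leaves hres, Finset.inter_comm, Finset.inter_eq_left]
    exact hsub
  refine ⟨by simp, chain'_cons_of_forall hch hlt, ?_, node u (leaf a), ?_, ?_⟩
  · rw [htf, leaves_node]
    intro x hx
    rcases Finset.mem_insert.1 hx with rfl | hx
    · exact Finset.mem_union_right _ ha
    · exact Finset.mem_union_left _ (hsub hx)
  · rw [htf]; simp [restrict, hresl, hresr]
  · rw [ssplits_node, ssplits_leaf, hss, catSS_cons]
    have hlv : (node u (leaf a)).leaves = (a :: M).toFinset := by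
      rw [leaves_node, leaves_leaf, hlvu, htf]
      ext y; simp [or_comm]
    rw [hlv, Set.union_comm, Set.singleton_union]

/-- Prepend a leaf `a` sitting in the left child to a comb contained in the right child. -/
theorem wit_extend_left {lt : X → X → Prop} {l r : BTree X} {M : List X} {a : X}
    (hph : Phylo (node l r)) (h : Wit lt r M) (ha : a ∈ l.leaves)
    (hlt : ∀ x ∈ M, lt a x) : Wit lt (node l r) (a :: M) := by
  obtain ⟨hne, hch, hsub, u, hres, hss⟩ := h
  obtain ⟨hpl, hpr, hd⟩ := phylo_node hph
  have haL : a ∉ r.leaves := Finset.disjoint_left.1 hd ha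
  have htf : (a :: M).toFinset = insert a M.toFinset := by simp
  have hresr : restrict r (insert a M.toFinset) = some u := by
    rw [← hres]
    apply restrict_congr
    intro x hx
    simp only [Finset.mem_insert]
    constructor
    · rintro (rfl | hxM)
      · exact absurd hx haL
      · exact hxM
    · exact Or.inr
  have hresl : restrict l (insert a M.toFinset) = some (leaf a) := by
    have : restrict l (insert a M.toFinset) = restrict l {a} := by
      apply restrict_congr
      intro x hx
      simp only [Finset.mem_insert, Finset.mem_singleton]
      constructor
      · rintro (rfl | hxM)
        · rfl
        · exact absurd hx (Finset.disjoint_right.1 hd (hsub hxM))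
      · exact Or.inl
    rw [this]
    exact restrict_singleton hpl ha
  have hlvu : u.leaves = M.toFinset := by
    rw [restrict_leaves hres, Finset.inter_comm, Finset.inter_eq_left]
    exact hsub
  refine ⟨by simp, chain'_cons_of_forall hch hlt, ?_, node (leaf a) u, ?_, ?_⟩
  · rw [htf, leaves_node]
    intro x hx
    rcases Finset.mem_insert.1 hx with rfl | hx
    · exact Finset.mem_union_left _ ha
    · exact Finset.mem_union_right _ (hsub hx)
  · rw [htf]; simp [restrict, hresl, hresr]
  · rw [ssplits_node, ssplits_leaf, hss, catSS_cons]
    have hlv : (node (leaf a) u).leaves = (a :: M).toFinset := by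
      rw [leaves_node, leaves_leaf, hlvu, htf]
      ext y; simp
    rw [hlv, Set.singleton_union]

end BTree
namespace BTree

theorem logb_le_add_of_le_mul {k m : ℕ} {r : ℝ} (hk : 1 ≤ k) (hm : 1 ≤ m)
    (h : (m : ℝ) ≤ r * k) : Real.logb 2 m ≤ Real.logb 2 r + Real.logb 2 k := by
  have hk0 : (0 : ℝ) < k := by exact_mod_cast hk
  have hm0 : (0 : ℝ) < m := by exact_mod_cast hm
  have hr : 0 < r := by nlinarith
  calc Real.logb 2 m ≤ Real.logb 2 (r * k) :=
        Real.logb_le_logb_of_le one_lt_two hm0 h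
    _ = Real.logb 2 r + Real.logb 2 k := Real.logb_mul (ne_of_gt hr) (ne_of_gt hk0)

theorem logb2_8 : Real.logb 2 (8 : ℝ) = 3 := by
  have : (8 : ℝ) = 2 ^ (3 : ℕ) := by norm_num
  rw [this, Real.logb, Real.log_pow]
  have h2 : Real.log 2 ≠ 0 := ne_of_gt (Real.log_pos one_lt_two)
  field_simp
  norm_num

theorem logb2_2 : Real.logb 2 (2 : ℝ) = 1 := Real.logb_self_eq_one one_lt_two

theorem logb2_167 : Real.logb 2 ((16 : ℝ) / 7) ≤ 3 / 2 := by
  rw [Real.logb_le_iff_le_rpow one_lt_two (by norm_num)]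
  have hpos : (0 : ℝ) < (2 : ℝ) ^ ((3 : ℝ) / 2) := Real.rpow_pos_of_pos (by norm_num) _
  have hsq : ((2 : ℝ) ^ ((3 : ℝ) / 2)) ^ (2 : ℕ) = 8 := by
    rw [← Real.rpow_natCast ((2 : ℝ) ^ ((3 : ℝ) / 2)) 2, ← Real.rpow_mul (by norm_num)]
    rw [show ((3:ℝ)/2 * (2:ℕ)) = ((3:ℕ):ℝ) by norm_num, Real.rpow_natCast]
    norm_num
  nlinarith [hpos, hsq]

/-- Numeric step for the factor-8 double extension. -/
theorem num_step8 {k m : ℕ} (hk : 1 ≤ k) (hm : 1 ≤ m) (h : (m : ℝ) ≤ 8 * k) :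
    2 + (2/3) * Real.logb 2 m ≤ 4 + (2/3) * Real.logb 2 k := by
  have := logb_le_add_of_le_mul hk hm h
  rw [logb2_8] at this
  linarith

/-- Numeric step for the 7/16 single extension. -/
theorem num_step167 {k m : ℕ} (hk : 1 ≤ k) (hm : 1 ≤ m) (h : 7 * (m : ℝ) ≤ 16 * k) :
    2 + (2/3) * Real.logb 2 m ≤ 3 + (2/3) * Real.logb 2 k := by
  have h' : (m : ℝ) ≤ (16 / 7) * k := by linarith
  have := logb_le_add_of_le_mul hk hm h'
  have h2 := logb2_167
  linarith

/-- Numeric step for the factor-2 single extension. -/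
theorem num_step2 {k m : ℕ} (hk : 1 ≤ k) (hm : 1 ≤ m) (h : (m : ℝ) ≤ 2 * k) :
    2 + (2/3) * Real.logb 2 m ≤ 3 + (2/3) * Real.logb 2 k := by
  have := logb_le_add_of_le_mul hk hm h
  rw [logb2_2] at this
  linarith

end BTree
namespace BTree

variable {X : Type} [DecidableEq X]

theorem main_recursion (key : X → ℕ) (hinj : Function.Injective key) (s : BTree X) :
    ∀ B : Finset X, s.Phylo → B ⊆ s.leaves → B.Nonempty →
    ∃ Mi Md : List X,
      Wit (fun a b => key a < key b) s Mi ∧ Wit (fun a b => key b < key a) s Md ∧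
      Mi.toFinset ⊆ B ∧ Md.toFinset ⊆ B ∧
      2 + (2/3) * Real.logb 2 B.card ≤ (Mi.length : ℝ) + (Md.length : ℝ) := by
  induction s with
  | leaf x =>
    intro B _ hBs hBne
    have hBx : B = {x} := by
      rw [leaves_leaf] at hBs
      rcases Finset.subset_singleton_iff.1 hBs with rfl | h
      · exact absurd hBne (by simp)
      · exact h
    subst hBx
    refine ⟨[x], [x], wit_leaf _ x, wit_leaf _ x, by simp, by simp, ?_⟩
    simp [Real.logb_one]
    norm_num
  | node l r ihl ihr =>
    intro B hph hBs hBne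
    obtain ⟨hpl, hpr, hd⟩ := phylo_node hph
    set Bl := B ∩ l.leaves with hBldef
    set Br := B ∩ r.leaves with hBrdef
    have hBlsub : Bl ⊆ l.leaves := Finset.inter_subset_right
    have hBrsub : Br ⊆ r.leaves := Finset.inter_subset_right
    have hBlB : Bl ⊆ B := Finset.inter_subset_left
    have hBrB : Br ⊆ B := Finset.inter_subset_left
    have hmem : ∀ x ∈ B, x ∈ l.leaves ∨ x ∈ r.leaves := by
      intro x hx
      have := hBs hx
      rw [leaves_node, Finset.mem_union] at this
      exact this
    have hunion : Bl ∪ Br = B := by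
      ext y
      simp only [hBldef, hBrdef, Finset.mem_union, Finset.mem_inter]
      constructor
      · rintro (⟨h, _⟩ | ⟨h, _⟩) <;> exact h
      · intro hy
        rcases hmem y hy with h | h
        · exact Or.inl ⟨hy, h⟩
        · exact Or.inr ⟨hy, h⟩
    have hdisjB : Disjoint Bl Br :=
      Finset.disjoint_of_subset_left hBlsub (Finset.disjoint_of_subset_right hBrsub hd)
    have hcardsum : Bl.card + Br.card = B.card := by
      rw [← Finset.card_union_of_disjoint hdisjB, hunion]
    have hm1 : 1 ≤ B.card := Finset.card_pos.2 hBne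
    have hcross : ∀ {x y : X}, x ∈ l.leaves → y ∈ r.leaves → key x ≠ key y := by
      intro x y hx hy h
      have : x = y := hinj h
      subst this
      exact (Finset.disjoint_left.1 hd hx) hy
    by_cases hBr0 : Br = ∅
    · have hBsl : B ⊆ l.leaves := by
        intro x hx
        rcases hmem x hx with h | h
        · exact h
        · exact absurd (Finset.mem_inter.2 ⟨hx, h⟩) (by rw [← hBrdef, hBr0]; simp)
      obtain ⟨Mi, Md, wi, wd, si, sd, bnd⟩ := ihl B hpl hBsl hBne
      exact ⟨Mi, Md, wit_lift_left hph wi, wit_lift_left hph wd, si, sd, bnd⟩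
    by_cases hBl0 : Bl = ∅
    · have hBsr : B ⊆ r.leaves := by
        intro x hx
        rcases hmem x hx with h | h
        · exact absurd (Finset.mem_inter.2 ⟨hx, h⟩) (by rw [← hBldef, hBl0]; simp)
        · exact h
      obtain ⟨Mi, Md, wi, wd, si, sd, bnd⟩ := ihr B hpr hBsr hBne
      exact ⟨Mi, Md, wit_lift_right hph wi, wit_lift_right hph wd, si, sd, bnd⟩
    have hBlne : Bl.Nonempty := Finset.nonempty_of_ne_empty hBl0
    have hBrne : Br.Nonempty := Finset.nonempty_of_ne_empty hBr0
    have hkl1 : 1 ≤ Bl.card := Finset.card_pos.2 hBlne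
    have hkr1 : 1 ≤ Br.card := Finset.card_pos.2 hBrne
    obtain ⟨β, hβB, hβmin⟩ := Finset.exists_min_image B key hBne
    obtain ⟨τ, hτB, hτmax⟩ := Finset.exists_max_image B key hBne
    have hβlt : ∀ x ∈ B, x ≠ β → key β < key x := by
      intro x hx hne
      exact lt_of_le_of_ne (hβmin x hx) (fun h => hne (hinj h.symm))
    have hτgt : ∀ x ∈ B, x ≠ τ → key x < key τ := by
      intro x hx hne
      exact lt_of_le_of_ne (hτmax x hx) (fun h => hne (hinj h))
    by_cases hβl : β ∈ l.leaves <;> by_cases hτl : τ ∈ l.leaves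
    · -- CASE 1 : β, τ both in the left child
      by_cases h8 : (B.card : ℝ) ≤ 8 * Br.card
      · -- extend both combs into the right child
        obtain ⟨Mi', Md', wi, wd, si, sd, bnd⟩ := ihr Br hpr hBrsub hBrne
        have hWi : Wit (fun a b => key a < key b) (node l r) (β :: Mi') := by
          refine wit_extend_left hph wi hβl ?_
          intro x hx
          refine hβlt x (hBrB (si (List.mem_toFinset.2 hx))) ?_
          intro h; subst h
          exact hcross hβl (hBrsub (si (List.mem_toFinset.2 hx))) rfl
        have hWd : Wit (fun a b => key b < key a) (node l r) (τ :: Md') := by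
          refine wit_extend_left hph wd hτl ?_
          intro x hx
          refine hτgt x (hBrB (sd (List.mem_toFinset.2 hx))) ?_
          intro h; subst h
          exact hcross hτl (hBrsub (sd (List.mem_toFinset.2 hx))) rfl
        refine ⟨β :: Mi', τ :: Md', hWi, hWd, ?_, ?_, ?_⟩
        · intro x hx
          simp only [List.toFinset_cons, Finset.mem_insert] at hx
          rcases hx with rfl | hx'
          · exact hβB
          · exact hBrB (si hx')
        · intro x hx
          simp only [List.toFinset_cons, Finset.mem_insert] at hx
          rcases hx with rfl | hx'
          · exact hτB
          · exact hBrB (sd hx')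
        · have := num_step8 hkr1 hm1 h8
          simp only [List.length_cons]
          push_cast
          linarith
      · -- the right child is tiny; split the left part at some a ∈ Br
        obtain ⟨a, haBr⟩ := hBrne
        have har : a ∈ r.leaves := hBrsub haBr
        set Bp := Bl.filter (fun x => key a < key x) with hBpdef
        set Bm := Bl.filter (fun x => key x < key a) with hBmdef
        have hnegeq : Bl.filter (fun x => ¬ key a < key x) = Bm := by
          apply Finset.filter_congr
          intro x hx
          have hne : key x ≠ key a := hcross (hBlsub hx) har
          constructor
          · intro h; simp only [not_lt] at h; omega
          · intro h; simp only [not_lt]; omega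
        have hsplit : Bp.card + Bm.card = Bl.card := by
          rw [← hnegeq]
          exact Finset.card_filter_add_card_filter_not _
        have hτp : τ ∈ Bp := by
          rw [hBpdef, Finset.mem_filter]
          refine ⟨Finset.mem_inter.2 ⟨hτB, hτl⟩, ?_⟩
          refine hτgt a (hBrB haBr) ?_
          intro h; subst h
          exact hcross hτl har rfl
        have hβm : β ∈ Bm := by
          rw [hBmdef, Finset.mem_filter]
          refine ⟨Finset.mem_inter.2 ⟨hβB, hβl⟩, ?_⟩
          refine hβlt a (hBrB haBr) ?_
          intro h; subst h
          exact hcross hβl har rfl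
        by_cases hbig : Bm.card ≤ Bp.card
        · obtain ⟨Mi', Md', wi, wd, si, sd, bnd⟩ :=
            ihl Bp hpl ((Finset.filter_subset _ _).trans hBlsub) ⟨τ, hτp⟩
          have hWi : Wit (fun a b => key a < key b) (node l r) (a :: Mi') := by
            refine wit_extend_right hph wi har ?_
            intro x hx
            exact (Finset.mem_filter.1 (si (List.mem_toFinset.2 hx))).2
          refine ⟨a :: Mi', Md', hWi, wit_lift_left hph wd, ?_, ?_, ?_⟩
          · intro x hx
            simp only [List.toFinset_cons, Finset.mem_insert] at hx
            rcases hx with rfl | hx'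
            · exact hBrB haBr
            · exact hBlB ((Finset.filter_subset _ _) (si hx'))
          · exact fun x hx => hBlB ((Finset.filter_subset _ _) (sd hx))
          · have hp1 : 1 ≤ Bp.card := Finset.card_pos.2 ⟨τ, hτp⟩
            push_neg at h8
            have h716 : 7 * (B.card : ℝ) ≤ 16 * Bp.card := by
              have c1 : (Bp.card : ℝ) + Bm.card = Bl.card := by exact_mod_cast hsplit
              have c2 : (Bl.card : ℝ) + Br.card = B.card := by exact_mod_cast hcardsum
              have c3 : (Bm.card : ℝ) ≤ Bp.card := by exact_mod_cast hbig
              linarith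
            have := num_step167 hp1 hm1 h716
            simp only [List.length_cons]
            push_cast
            linarith
        · obtain ⟨Mi', Md', wi, wd, si, sd, bnd⟩ :=
            ihl Bm hpl ((Finset.filter_subset _ _).trans hBlsub) ⟨β, hβm⟩
          have hWd : Wit (fun a b => key b < key a) (node l r) (a :: Md') := by
            refine wit_extend_right hph wd har ?_
            intro x hx
            exact (Finset.mem_filter.1 (sd (List.mem_toFinset.2 hx))).2
          refine ⟨Mi', a :: Md', wit_lift_left hph wi, hWd, ?_, ?_, ?_⟩
          · exact fun x hx => hBlB ((Finset.filter_subset _ _) (si hx))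
          · intro x hx
            simp only [List.toFinset_cons, Finset.mem_insert] at hx
            rcases hx with rfl | hx'
            · exact hBrB haBr
            · exact hBlB ((Finset.filter_subset _ _) (sd hx'))
          · have hp1 : 1 ≤ Bm.card := Finset.card_pos.2 ⟨β, hβm⟩
            push_neg at h8
            push_neg at hbig
            have h716 : 7 * (B.card : ℝ) ≤ 16 * Bm.card := by
              have c1 : (Bp.card : ℝ) + Bm.card = Bl.card := by exact_mod_cast hsplit
              have c2 : (Bl.card : ℝ) + Br.card = B.card := by exact_mod_cast hcardsum
              have c3 : (Bp.card : ℝ) ≤ Bm.card := by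
                have := le_of_lt hbig
                exact_mod_cast this
              linarith
            have := num_step167 hp1 hm1 h716
            simp only [List.length_cons]
            push_cast
            linarith
    · -- CASE 2 : β left, τ right
      have hτr : τ ∈ r.leaves := by
        rcases hmem τ hτB with h | h
        · exact absurd h hτl
        · exact h
      by_cases h2 : (B.card : ℝ) ≤ 2 * Br.card
      · obtain ⟨Mi', Md', wi, wd, si, sd, bnd⟩ := ihr Br hpr hBrsub hBrne
        have hWi : Wit (fun a b => key a < key b) (node l r) (β :: Mi') := by
          refine wit_extend_left hph wi hβl ?_
          intro x hx
          refine hβlt x (hBrB (si (List.mem_toFinset.2 hx))) ?_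
          intro h; subst h
          exact hcross hβl (hBrsub (si (List.mem_toFinset.2 hx))) rfl
        refine ⟨β :: Mi', Md', hWi, wit_lift_right hph wd, ?_, ?_, ?_⟩
        · intro x hx
          simp only [List.toFinset_cons, Finset.mem_insert] at hx
          rcases hx with rfl | hx'
          · exact hβB
          · exact hBrB (si hx')
        · exact fun x hx => hBrB (sd hx)
        · have := num_step2 hkr1 hm1 h2
          simp only [List.length_cons]
          push_cast
          linarith
      · obtain ⟨Mi', Md', wi, wd, si, sd, bnd⟩ := ihl Bl hpl hBlsub hBlne
        have hWd : Wit (fun a b => key b < key a) (node l r) (τ :: Md') := by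
          refine wit_extend_right hph wd hτr ?_
          intro x hx
          refine hτgt x (hBlB (sd (List.mem_toFinset.2 hx))) ?_
          intro h; subst h
          exact hcross (hBlsub (sd (List.mem_toFinset.2 hx))) hτr rfl
        refine ⟨Mi', τ :: Md', wit_lift_left hph wi, hWd, ?_, ?_, ?_⟩
        · exact fun x hx => hBlB (si hx)
        · intro x hx
          simp only [List.toFinset_cons, Finset.mem_insert] at hx
          rcases hx with rfl | hx'
          · exact hτB
          · exact hBlB (sd hx')
        · push_neg at h2
          have h2' : (B.card : ℝ) ≤ 2 * Bl.card := by
            have c2 : (Bl.card : ℝ) + Br.card = B.card := by exact_mod_cast hcardsum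
            linarith
          have := num_step2 hkl1 hm1 h2'
          simp only [List.length_cons]
          push_cast
          linarith
    · -- CASE 3 : β right, τ left
      have hβr : β ∈ r.leaves := by
        rcases hmem β hβB with h | h
        · exact absurd h hβl
        · exact h
      by_cases h2 : (B.card : ℝ) ≤ 2 * Br.card
      · obtain ⟨Mi', Md', wi, wd, si, sd, bnd⟩ := ihr Br hpr hBrsub hBrne
        have hWd : Wit (fun a b => key b < key a) (node l r) (τ :: Md') := by
          refine wit_extend_left hph wd hτl ?_
          intro x hx
          refine hτgt x (hBrB (sd (List.mem_toFinset.2 hx))) ?_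
          intro h; subst h
          exact hcross hτl (hBrsub (sd (List.mem_toFinset.2 hx))) rfl
        refine ⟨Mi', τ :: Md', wit_lift_right hph wi, hWd, ?_, ?_, ?_⟩
        · exact fun x hx => hBrB (si hx)
        · intro x hx
          simp only [List.toFinset_cons, Finset.mem_insert] at hx
          rcases hx with rfl | hx'
          · exact hτB
          · exact hBrB (sd hx')
        · have := num_step2 hkr1 hm1 h2
          simp only [List.length_cons]
          push_cast
          linarith
      · obtain ⟨Mi', Md', wi, wd, si, sd, bnd⟩ := ihl Bl hpl hBlsub hBlne
        have hWi : Wit (fun a b => key a < key b) (node l r) (β :: Mi') := by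
          refine wit_extend_right hph wi hβr ?_
          intro x hx
          refine hβlt x (hBlB (si (List.mem_toFinset.2 hx))) ?_
          intro h; subst h
          exact hcross (hBlsub (si (List.mem_toFinset.2 hx))) hβr rfl
        refine ⟨β :: Mi', Md', hWi, wit_lift_left hph wd, ?_, ?_, ?_⟩
        · intro x hx
          simp only [List.toFinset_cons, Finset.mem_insert] at hx
          rcases hx with rfl | hx'
          · exact hβB
          · exact hBlB (si hx')
        · exact fun x hx => hBlB (sd hx)
        · push_neg at h2
          have h2' : (B.card : ℝ) ≤ 2 * Bl.card := by
            have c2 : (Bl.card : ℝ) + Br.card = B.card := by exact_mod_cast hcardsum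
            linarith
          have := num_step2 hkl1 hm1 h2'
          simp only [List.length_cons]
          push_cast
          linarith
    · -- CASE 4 : β, τ both in the right child
      have hβr : β ∈ r.leaves := by
        rcases hmem β hβB with h | h
        · exact absurd h hβl
        · exact h
      have hτr : τ ∈ r.leaves := by
        rcases hmem τ hτB with h | h
        · exact absurd h hτl
        · exact h
      by_cases h8 : (B.card : ℝ) ≤ 8 * Bl.card
      · obtain ⟨Mi', Md', wi, wd, si, sd, bnd⟩ := ihl Bl hpl hBlsub hBlne
        have hWi : Wit (fun a b => key a < key b) (node l r) (β :: Mi') := by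
          refine wit_extend_right hph wi hβr ?_
          intro x hx
          refine hβlt x (hBlB (si (List.mem_toFinset.2 hx))) ?_
          intro h; subst h
          exact hcross (hBlsub (si (List.mem_toFinset.2 hx))) hβr rfl
        have hWd : Wit (fun a b => key b < key a) (node l r) (τ :: Md') := by
          refine wit_extend_right hph wd hτr ?_
          intro x hx
          refine hτgt x (hBlB (sd (List.mem_toFinset.2 hx))) ?_
          intro h; subst h
          exact hcross (hBlsub (sd (List.mem_toFinset.2 hx))) hτr rfl
        refine ⟨β :: Mi', τ :: Md', hWi, hWd, ?_, ?_, ?_⟩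
        · intro x hx
          simp only [List.toFinset_cons, Finset.mem_insert] at hx
          rcases hx with rfl | hx'
          · exact hβB
          · exact hBlB (si hx')
        · intro x hx
          simp only [List.toFinset_cons, Finset.mem_insert] at hx
          rcases hx with rfl | hx'
          · exact hτB
          · exact hBlB (sd hx')
        · have := num_step8 hkl1 hm1 h8
          simp only [List.length_cons]
          push_cast
          linarith
      · obtain ⟨a, haBl⟩ := hBlne
        have hal : a ∈ l.leaves := hBlsub haBl
        set Bp := Br.filter (fun x => key a < key x) with hBpdef
        set Bm := Br.filter (fun x => key x < key a) with hBmdef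
        have hnegeq : Br.filter (fun x => ¬ key a < key x) = Bm := by
          apply Finset.filter_congr
          intro x hx
          have hne : key x ≠ key a := (hcross hal (hBrsub hx)).symm
          constructor
          · intro h; simp only [not_lt] at h; omega
          · intro h; simp only [not_lt]; omega
        have hsplit : Bp.card + Bm.card = Br.card := by
          rw [← hnegeq]
          exact Finset.card_filter_add_card_filter_not _
        have hτp : τ ∈ Bp := by
          rw [hBpdef, Finset.mem_filter]
          refine ⟨Finset.mem_inter.2 ⟨hτB, hτr⟩, ?_⟩
          refine hτgt a (hBlB haBl) ?_
          intro h; subst h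
          exact hcross hal hτr rfl
        have hβm : β ∈ Bm := by
          rw [hBmdef, Finset.mem_filter]
          refine ⟨Finset.mem_inter.2 ⟨hβB, hβr⟩, ?_⟩
          refine hβlt a (hBlB haBl) ?_
          intro h; subst h
          exact hcross hal hβr rfl
        by_cases hbig : Bm.card ≤ Bp.card
        · obtain ⟨Mi', Md', wi, wd, si, sd, bnd⟩ :=
            ihr Bp hpr ((Finset.filter_subset _ _).trans hBrsub) ⟨τ, hτp⟩
          have hWi : Wit (fun a b => key a < key b) (node l r) (a :: Mi') := by
            refine wit_extend_left hph wi hal ?_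
            intro x hx
            exact (Finset.mem_filter.1 (si (List.mem_toFinset.2 hx))).2
          refine ⟨a :: Mi', Md', hWi, wit_lift_right hph wd, ?_, ?_, ?_⟩
          · intro x hx
            simp only [List.toFinset_cons, Finset.mem_insert] at hx
            rcases hx with rfl | hx'
            · exact hBlB haBl
            · exact hBrB ((Finset.filter_subset _ _) (si hx'))
          · exact fun x hx => hBrB ((Finset.filter_subset _ _) (sd hx))
          · have hp1 : 1 ≤ Bp.card := Finset.card_pos.2 ⟨τ, hτp⟩
            push_neg at h8
            have h716 : 7 * (B.card : ℝ) ≤ 16 * Bp.card := by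
              have c1 : (Bp.card : ℝ) + Bm.card = Br.card := by exact_mod_cast hsplit
              have c2 : (Bl.card : ℝ) + Br.card = B.card := by exact_mod_cast hcardsum
              have c3 : (Bm.card : ℝ) ≤ Bp.card := by exact_mod_cast hbig
              linarith
            have := num_step167 hp1 hm1 h716
            simp only [List.length_cons]
            push_cast
            linarith
        · obtain ⟨Mi', Md', wi, wd, si, sd, bnd⟩ :=
            ihr Bm hpr ((Finset.filter_subset _ _).trans hBrsub) ⟨β, hβm⟩
          have hWd : Wit (fun a b => key b < key a) (node l r) (a :: Md') := by
            refine wit_extend_left hph wd hal ?_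
            intro x hx
            exact (Finset.mem_filter.1 (sd (List.mem_toFinset.2 hx))).2
          refine ⟨Mi', a :: Md', wit_lift_right hph wi, hWd, ?_, ?_, ?_⟩
          · exact fun x hx => hBrB ((Finset.filter_subset _ _) (si hx))
          · intro x hx
            simp only [List.toFinset_cons, Finset.mem_insert] at hx
            rcases hx with rfl | hx'
            · exact hBlB haBl
            · exact hBrB ((Finset.filter_subset _ _) (sd hx'))
          · have hp1 : 1 ≤ Bm.card := Finset.card_pos.2 ⟨β, hβm⟩
            push_neg at h8
            push_neg at hbig
            have h716 : 7 * (B.card : ℝ) ≤ 16 * Bm.card := by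
              have c1 : (Bp.card : ℝ) + Bm.card = Br.card := by exact_mod_cast hsplit
              have c2 : (Bl.card : ℝ) + Br.card = B.card := by exact_mod_cast hcardsum
              have c3 : (Bp.card : ℝ) ≤ Bm.card := by
                have := le_of_lt hbig
                exact_mod_cast this
              linarith
            have := num_step167 hp1 hm1 h716
            simp only [List.length_cons]
            push_cast
            linarith

end BTree
namespace BTree

variable {X : Type} [DecidableEq X]

theorem uagree_core {t s c : BTree X} {L₀ M : List X} {lt : X → X → Prop}
    (hcus : usplits c = usplits t) (hclv : c.leaves = t.leaves)
    (hss : ssplits c = catSS L₀) (hLf : L₀.toFinset = c.leaves)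
    (hw : Wit lt s M) (hnd : M.Nodup) (hAt : M.toFinset ⊆ t.leaves)
    (hrel : M = L₀.filter (fun y => decide (y ∈ M.toFinset)) ∨
      M.reverse = L₀.filter (fun y => decide (y ∈ M.toFinset))) :
    UAgree t s M.toFinset := by
  obtain ⟨hMne, _, hAs, s', hress, hsss⟩ := hw
  set A := M.toFinset with hAdef
  have hAne : A.Nonempty := by
    cases M with
    | nil => exact absurd rfl hMne
    | cons x T => exact ⟨x, by simp [hAdef]⟩
  obtain ⟨x0, hx0⟩ := hAne
  obtain ⟨t', hrest⟩ := restrict_isSome (hAt hx0) hx0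
  have hust : usplits t' = catCS (L₀.filter (fun y => decide (y ∈ A))) := by
    rw [usplits_restrict hAt hrest, ← hcus]
    exact image_usplits_caterpillar hss hLf (hclv ▸ hAt) ⟨x0, hx0⟩
  have hlvs' : s'.leaves = A := by
    rw [restrict_leaves hress, Finset.inter_comm, Finset.inter_eq_left]
    exact hAs
  have huss : usplits s' = catCS M := by
    rw [usplits_eq, hsss, hlvs']
    rfl
  have hlvt' : t'.leaves = A := by
    rw [restrict_leaves hrest, Finset.inter_comm, Finset.inter_eq_left]
    exact hAt
  refine ⟨t', s', hrest, hress, ?_, ?_⟩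
  · rw [hlvt', hlvs']
  · rw [hust, huss]
    rcases hrel with h | h
    · rw [← h]
    · rw [← h, catCS_reverse hnd]

theorem btree_fin_zero (t : BTree (Fin 0)) : False := by
  induction t with
  | leaf x => exact x.elim0
  | node l r ihl _ => exact ihl

theorem pairwise_indexOf {L : List X} (h : L.Nodup) :
    L.Pairwise (fun a b => L.idxOf a < L.idxOf b) := by
  rw [List.pairwise_iff_getElem]
  intro i j hi hj hij
  rw [h.idxOf_getElem i hi, h.idxOf_getElem j hj]
  exact hij

theorem eq_of_sorted_of_perm {key : X → ℕ} {L M : List X} (hperm : L.Perm M)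
    (hL : L.Pairwise (fun a b => key a < key b))
    (hM : M.Pairwise (fun a b => key a < key b)) : L = M := by
  letI : IsAntisymm X (fun a b => key a < key b) :=
    ⟨fun a b h1 h2 => absurd (h1.trans h2) (lt_irrefl _)⟩
  exact List.Perm.eq_of_pairwise (fun a b _ _ h1 h2 => absurd (h1.trans h2) (lt_irrefl _)) hL hM hperm

theorem nodup_of_pairwise_key {key : X → ℕ} {M : List X}
    (h : M.Pairwise (fun a b => key a < key b)) : M.Nodup :=
  h.imp (fun {a b} hab => by rintro rfl; exact absurd hab (lt_irrefl _))

theorem nodup_of_pairwise_key' {key : X → ℕ} {M : List X}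
    (h : M.Pairwise (fun a b => key b < key a)) : M.Nodup :=
  h.imp (fun {a b} hab => by rintro rfl; exact absurd hab (lt_irrefl _))

end BTree


open BTree

/-- Martin–Thatte (Proposition 1): any two unrooted binary phylogenetic trees on
the same leaf set of size `n`, one of which is a caterpillar, have an agreement
subtree of size at least `(1/3)·log₂ n`. -/
theorem caterpillar_agreement_lower_bound (n : ℕ)
    (t s : BTree (Fin n))
    (ht : t.Phylo) (hs : s.Phylo)
    (hlt : t.leaves = Finset.univ) (hls : s.leaves = Finset.univ)
    (hcat : UCaterpillar t) :
    ∃ A : Finset (Fin n), (1 / 3) * Real.logb 2 n ≤ (A.card : ℝ) ∧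
      UAgree t s A := by
  rcases Nat.eq_zero_or_pos n with rfl | hn
  · exact (btree_fin_zero t).elim
  obtain ⟨c, hccat, hclv, hcus⟩ := hcat
  obtain ⟨L₀, hL₀nd, hL₀tf, hL₀ss⟩ := caterpillar_ssplits hccat
  have hL₀univ : ∀ x : Fin n, x ∈ L₀ := by
    intro x
    rw [← List.mem_toFinset, hL₀tf, hclv, hlt]
    exact Finset.mem_univ x
  set key : Fin n → ℕ := fun x => L₀.idxOf x with hkey
  have hinj : Function.Injective key := by
    intro a b h
    exact (List.idxOf_inj (hL₀univ a)).1 h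
  have huniv_sub : (Finset.univ : Finset (Fin n)) ⊆ s.leaves := by rw [hls]
  have hnty : Nonempty (Fin n) := ⟨⟨0, hn⟩⟩
  obtain ⟨Mi, Md, wi, wd, _, _, bnd⟩ :=
    main_recursion key hinj s Finset.univ hs huniv_sub Finset.univ_nonempty
  simp only [Finset.card_univ, Fintype.card_fin] at bnd
  have hAt : ∀ M : List (Fin n), M.toFinset ⊆ t.leaves := by
    intro M; rw [hlt]; exact Finset.subset_univ _
  have hM₀tf : ∀ A : Finset (Fin n),
      (L₀.filter (fun y => decide (y ∈ A))).toFinset = A := by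
    intro A
    rw [toFinset_filter_mem, hL₀tf, hclv, hlt, Finset.univ_inter]
  letI : IsTrans (Fin n) (fun a b => key a < key b) := ⟨fun a b c h1 h2 => h1.trans h2⟩
  letI : IsTrans (Fin n) (fun a b => key b < key a) := ⟨fun a b c h1 h2 => h2.trans h1⟩
  rcases le_total Mi.length Md.length with hle | hle
  · -- use the decreasing comb
    have hpd : Md.Pairwise (fun a b => key b < key a) := List.isChain_iff_pairwise.1 wd.2.1
    have hnd : Md.Nodup := nodup_of_pairwise_key' hpd
    set M₀ := L₀.filter (fun y => decide (y ∈ Md.toFinset)) with hM₀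
    have hM₀p : M₀.Pairwise (fun a b => key a < key b) :=
      (pairwise_indexOf hL₀nd).sublist (List.filter_sublist (l := L₀))
    have hM₀nd : M₀.Nodup := nodup_of_pairwise_key hM₀p
    have hperm : Md.reverse.Perm M₀ :=
      (Md.reverse_perm).trans
        (List.perm_of_nodup_nodup_toFinset_eq hnd hM₀nd (hM₀tf Md.toFinset).symm)
    have hrevp : Md.reverse.Pairwise (fun a b => key a < key b) := by
      rw [List.pairwise_reverse]
      exact hpd
    have heq : Md.reverse = M₀ := eq_of_sorted_of_perm hperm hrevp hM₀p
    refine ⟨Md.toFinset, ?_,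
      uagree_core hcus hclv hL₀ss hL₀tf wd hnd (hAt Md) (Or.inr heq)⟩
    have hcard : (Md.toFinset.card : ℝ) = Md.length := by
      rw [List.toFinset_card_of_nodup hnd]
    have hle' : (Mi.length : ℝ) ≤ Md.length := by exact_mod_cast hle
    rw [hcard]
    linarith
  · -- use the increasing comb
    have hpi : Mi.Pairwise (fun a b => key a < key b) := List.isChain_iff_pairwise.1 wi.2.1
    have hnd : Mi.Nodup := nodup_of_pairwise_key hpi
    set M₀ := L₀.filter (fun y => decide (y ∈ Mi.toFinset)) with hM₀
    have hM₀p : M₀.Pairwise (fun a b => key a < key b) :=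
      (pairwise_indexOf hL₀nd).sublist (List.filter_sublist (l := L₀))
    have hM₀nd : M₀.Nodup := nodup_of_pairwise_key hM₀p
    have hperm : Mi.Perm M₀ :=
      List.perm_of_nodup_nodup_toFinset_eq hnd hM₀nd (hM₀tf Mi.toFinset).symm
    have heq : Mi = M₀ := eq_of_sorted_of_perm hperm hpi hM₀p
    refine ⟨Mi.toFinset, ?_,
      uagree_core hcus hclv hL₀ss hL₀tf wi hnd (hAt Mi) (Or.inl heq)⟩
    have hcard : (Mi.toFinset.card : ℝ) = Mi.length := by
      rw [List.toFinset_card_of_nodup hnd]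
    have hle' : (Md.length : ℝ) ≤ Mi.length := by exact_mod_cast hle
    rw [hcard]
    linarith
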